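/- Let $E$ be a nonempty convex subset of $\mathbb{R}^{J+1}$ and $u \in E$ Pareto optimal. Then there exists a nonzero vector $b \in \mathbb{R}^{J+1}$ with $b \ge 0$ componentwise and a real $\beta$ such that $\langle b, u \rangle = \beta$ and $\langle b, x \rangle \ge \beta$ for all $x \in E$. -/

import Mathlib

/-- `u` is a Pareto optimal point of `E ⊆ ℝ^{J+1}`. -/
def IsPareto {J : ℕ} (E : Set (Fin (J + 1) → ℝ)) (u : Fin (J + 1) → ℝ) : Prop :=
  u ∈ E ∧ ∀ v ∈ E, (∀ j, v j ≤ u j) → v = u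

theorem pareto_supporting_hyperplane {J : ℕ}
    (E : Set (Fin (J + 1) → ℝ)) (hEne : E.Nonempty) (hEconv : Convex ℝ E)
    (u : Fin (J + 1) → ℝ) (hu : IsPareto E u) :
    ∃ (b : Fin (J + 1) → ℝ) (β : ℝ), b ≠ 0 ∧ (∀ j, 0 ≤ b j) ∧
      (∑ j, b j * u j) = β ∧ ∀ x ∈ E, β ≤ ∑ j, b j * x j := by
  classical
  set s : Set (Fin (J + 1) → ℝ) := {v | ∀ j, v j < u j} with hs
  have hsconv : Convex ℝ s := by
    intro x hx y hy a c ha hc hac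
    intro j
    calc a * x j + c * y j < a * u j + c * u j := by
          rcases eq_or_lt_of_le ha with rfl | ha'
          · simpa using mul_lt_mul_of_pos_left (hy j) (by linarith)
          rcases eq_or_lt_of_le hc with rfl | hc'
          · simpa using mul_lt_mul_of_pos_left (hx j) (by linarith)
          · exact add_lt_add (mul_lt_mul_of_pos_left (hx j) ha')
              (mul_lt_mul_of_pos_left (hy j) hc')
      _ = u j := by rw [← add_mul, hac, one_mul]
  have hsopen : IsOpen s := by
    have : s = ⋂ j, {v : Fin (J + 1) → ℝ | v j < u j} := by
      ext v; simp [hs, Set.mem_iInter]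
    rw [this]
    exact isOpen_iInter_of_finite fun j =>
      isOpen_lt (continuous_apply j) continuous_const
  have hdisj : Disjoint s E := by
    rw [Set.disjoint_left]
    intro v hv hvE
    have := hu.2 v hvE fun j => (hv j).le
    exact absurd (this ▸ hv 0) (lt_irrefl _)
  obtain ⟨f, c, hfs, hfE⟩ := geometric_hahn_banach_open hsconv hsopen hEconv hdisj
  set b : Fin (J + 1) → ℝ := fun j => f (Pi.single j 1) with hb
  have hfrep : ∀ x, f x = ∑ j, b j * x j := by
    intro x
    have := LinearMap.pi_apply_eq_sum_univ (f : (Fin (J + 1) → ℝ) →ₗ[ℝ] ℝ) x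
    simp only [ContinuousLinearMap.coe_coe] at this
    rw [this]
    refine Finset.sum_congr rfl fun j _ => ?_
    rw [smul_eq_mul, mul_comm]
    congr 1
    congr 1
    ext k
    simp [Pi.single_apply, eq_comm]
  -- membership of perturbed points in s
  have hmem : ∀ (δ : ℝ), 0 < δ → ∀ (t : ℝ), 0 ≤ t → ∀ j₀ : Fin (J + 1),
      (fun j => u j - δ - t * (Pi.single j₀ 1 : Fin (J + 1) → ℝ) j) ∈ s := by
    intro δ hδ t ht j₀ j
    simp only
    rcases eq_or_ne j₀ j with rfl | h
    · simp only [Pi.single_eq_same]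
      nlinarith
    · simp [Pi.single_eq_of_ne' h]
      linarith
  -- f of such points
  have hfval : ∀ (δ t : ℝ) (j₀ : Fin (J + 1)),
      f (fun j => u j - δ - t * (Pi.single j₀ 1 : Fin (J + 1) → ℝ) j) = f u - δ * f (fun _ => 1) - t * b j₀ := by
    intro δ t j₀
    have : (fun j => u j - δ - t * (Pi.single j₀ 1 : Fin (J + 1) → ℝ) j)
        = u - δ • (fun _ => (1 : ℝ)) - t • (Pi.single j₀ 1 : Fin (J + 1) → ℝ) := by
      ext j; simp [mul_comm]
    rw [this]
    simp [map_sub, map_smul, smul_eq_mul]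
    exact Or.inl rfl
  have hfu_le : f u ≤ c := by
    have h : ∀ δ : ℝ, 0 < δ → f u - δ * f (fun _ => 1) < c := by
      intro δ hδ
      have := hfs _ (hmem δ hδ 0 le_rfl 0)
      rwa [hfval δ 0 0, zero_mul, sub_zero] at this
    by_contra hcon
    push_neg at hcon
    rcases le_or_gt (f (fun _ => 1)) 0 with h1 | h1
    · have := h 1 one_pos; nlinarith
    · have := h ((f u - c) / (2 * f (fun _ => 1))) (div_pos (by linarith) (by linarith))
      have h2 : (f u - c) / (2 * f (fun _ => 1)) * f (fun _ => 1) = (f u - c) / 2 := by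
        field_simp
      nlinarith
  have hc_le : c ≤ f u := hfE u hu.1
  have hcu : f u = c := le_antisymm hfu_le hc_le
  have hbnonneg : ∀ j, 0 ≤ b j := by
    intro j₀
    by_contra hneg
    push_neg at hneg
    have h : ∀ δ : ℝ, 0 < δ → ∀ t : ℝ, 0 ≤ t →
        f u - δ * f (fun _ => 1) - t * b j₀ < c := by
      intro δ hδ t ht
      have := hfs _ (hmem δ hδ t ht j₀)
      rwa [hfval] at this
    -- take δ small and t large
    set A := |f (fun _ => 1)| with hA
    have hA0 : 0 ≤ A := abs_nonneg _
    have hbpos : (0:ℝ) < -b j₀ := by linarith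
    have := h 1 one_pos ((1 + A) / (-b j₀)) (le_of_lt (div_pos (by linarith) hbpos))
    rw [hcu] at this
    have ht : (1 + A) / (-b j₀) * b j₀ = -(1 + A) := by
      rw [div_mul_eq_mul_div, div_eq_iff (ne_of_gt hbpos)]
      ring
    rw [ht] at this
    have habs : f (fun _ => 1) ≤ A := le_abs_self _
    nlinarith
  refine ⟨b, c, ?_, hbnonneg, by rw [← hfrep u, hcu], fun x hx => by rw [← hfrep x]; exact hfE x hx⟩
  -- b ≠ 0
  intro hb0
  obtain ⟨v, hv⟩ : s.Nonempty := ⟨fun j => u j - 1, fun j => by simp⟩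
  have h1 := hfs v hv
  rw [hfrep v, hb0] at h1
  simp at h1
  have h2 := hfE u hu.1
  rw [hfrep u, hb0] at h2
  simp at h2
  linarith
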